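/- arXiv:1007.4695 — 2 statements merged into one kernel-verified Lean document; each statement's English description precedes it below -/
import Mathlib

section
/- The form Q_- on g = h ⊕ d ⊕ h* given by Q_-((h1,x1,α1),(h2,x2,α2)) := −⟨h1,h2⟩_h + ⟨x1,x2⟩_d + α1(h2) + α2(h1) is nondegenerate, ad-invariant (Q_-([u,v],w) = −Q_-(v,[u,w])), and restricts nondegenerately to h. Its orthogonal complement m := h^⊥ equals {(h, x, ℓ(h)) : h ∈ h, x ∈ d}, and m is ad(h)-invariant: [h, m] ⊆ m. The linear map λ : G(d) → m, λ(x + ℓ(h)) = (h, x, ℓ(h)), is a linear isometry from (G(d), ⟨,⟩) onto (m, Q_-|_{m×m}), and the decomposition g = h ⊕ m is naturally reductive: Q_-([u,v]_m, w) + Q_-(v, [u,w]_m) = 0 for all u,v,w ∈ m, where u_m denotes the m-component of u ∈ g along h. -/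
open Module

variable {H D : Type} [LieRing H] [LieAlgebra ℝ H] [FiniteDimensional ℝ H]
  [LieRing D] [LieAlgebra ℝ D] [FiniteDimensional ℝ D]

/-- `beta BD π x y` is the element `β(x,y)` of `h*` given by `a ↦ ⟨π(a)x, y⟩_d`. -/
def beta (BD : LinearMap.BilinForm ℝ D) (π : H →ₗ[ℝ] D →ₗ[ℝ] D) (x y : D) : Dual ℝ H :=
  (BD.flip y).comp (π.flip x)

/-- The double extension bracket on `g = h ⊕ d ⊕ h*`. -/
def dbr (BD : LinearMap.BilinForm ℝ D) (π : H →ₗ[ℝ] D →ₗ[ℝ] D)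
    (u v : H × D × Dual ℝ H) : H × D × Dual ℝ H :=
  (⁅u.1, v.1⁆,
   ⁅u.2.1, v.2.1⁆ + π u.1 v.2.1 - π v.1 u.2.1,
   beta BD π u.2.1 v.2.1 - v.2.2.comp (LieAlgebra.ad ℝ H u.1)
     + u.2.2.comp (LieAlgebra.ad ℝ H v.1))

/-- The form `Q₋((h₁,x₁,α₁),(h₂,x₂,α₂)) = −⟨h₁,h₂⟩_h + ⟨x₁,x₂⟩_d + α₁(h₂) + α₂(h₁)`. -/
def Qminus (BH : LinearMap.BilinForm ℝ H) (BD : LinearMap.BilinForm ℝ D)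
    (u v : H × D × Dual ℝ H) : ℝ :=
  - BH u.1 v.1 + BD u.2.1 v.2.1 + u.2.2 v.1 + v.2.2 u.1

/-- The inverse of the isomorphism `ℓ : h → h*`, `ℓ(h) = ⟨h,·⟩_h`. -/
noncomputable def ellInv (BH : LinearMap.BilinForm ℝ H) (hBH : BH.Nondegenerate)
    (α : Dual ℝ H) : H :=
  (LinearMap.BilinForm.toDual BH hBH).symm α

/-- The metric on `G(d)`: `⟨x₁ + ℓ(h₁), x₂ + ℓ(h₂)⟩ = ⟨h₁,h₂⟩_h + ⟨x₁,x₂⟩_d`. -/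
noncomputable def gform (BH : LinearMap.BilinForm ℝ H) (hBH : BH.Nondegenerate)
    (BD : LinearMap.BilinForm ℝ D) (u v : D × Dual ℝ H) : ℝ :=
  BD u.1 v.1 + BH (ellInv BH hBH u.2) (ellInv BH hBH v.2)

/-- The map `λ : G(d) → m`, `λ(x + ℓ(h)) = (h, x, ℓ(h))`. -/
noncomputable def lam (BH : LinearMap.BilinForm ℝ H) (hBH : BH.Nondegenerate)
    (u : D × Dual ℝ H) : H × D × Dual ℝ H :=
  (ellInv BH hBH u.2, u.1, u.2)

/-- The projection of `g` onto `m = {(h,x,ℓ(h))}` along `h`. -/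
noncomputable def pmG (BH : LinearMap.BilinForm ℝ H) (hBH : BH.Nondegenerate)
    (w : H × D × Dual ℝ H) : H × D × Dual ℝ H :=
  (ellInv BH hBH w.2.2, w.2.1, w.2.2)


lemma beta_apply (BD : LinearMap.BilinForm ℝ D) (π : H →ₗ[ℝ] D →ₗ[ℝ] D) (x y : D) (a : H) :
    beta BD π x y a = BD (π a x) y := rfl

lemma BH_ellInv (BH : LinearMap.BilinForm ℝ H) (hBH : BH.Nondegenerate) (α : Dual ℝ H) :
    BH (ellInv BH hBH α) = α := by
  ext v
  exact LinearMap.BilinForm.apply_toDual_symm_apply α v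

lemma ellInv_BH (BH : LinearMap.BilinForm ℝ H) (hBH : BH.Nondegenerate) (a : H) :
    ellInv BH hBH (BH a) = a := by
  have h : BH.toDual hBH a = BH a := by ext v; rfl
  rw [ellInv, ← h, LinearEquiv.symm_apply_apply]

/-- Theorem 3.1 (infinitesimal version): `Q₋` is nondegenerate, ad-invariant and
nondegenerate on `h`; `m = h^⊥ = {(h,x,ℓ(h))}` is ad(h)-invariant; `λ` is a linear
isometry of `(G(d), ⟨,⟩)` onto `(m, Q₋)`; and `g = h ⊕ m` is naturally reductive. -/
theorem Gd_naturally_reductive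
    (BH : LinearMap.BilinForm ℝ H)
    (hBHsymm : ∀ a b : H, BH a b = BH b a)
    (hBHnd : BH.Nondegenerate)
    (hBHinv : ∀ a b c : H, BH ⁅a, b⁆ c = - BH b ⁅a, c⁆)
    (BD : LinearMap.BilinForm ℝ D)
    (hBDsymm : ∀ x y : D, BD x y = BD y x)
    (hBDnd : BD.Nondegenerate)
    (hBDinv : ∀ x y z : D, BD ⁅x, y⁆ z = - BD y ⁅x, z⁆)
    (π : H →ₗ[ℝ] D →ₗ[ℝ] D)
    (hπder : ∀ a : H, ∀ x y : D, π a ⁅x, y⁆ = ⁅π a x, y⁆ + ⁅x, π a y⁆)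
    (hπhom : ∀ a b : H, π ⁅a, b⁆ = π a ∘ₗ π b - π b ∘ₗ π a)
    (hπskew : ∀ a : H, ∀ x y : D, BD (π a x) y = - BD x (π a y)) :
    -- Q₋ is nondegenerate
    (∀ u : H × D × Dual ℝ H, (∀ v : H × D × Dual ℝ H, Qminus BH BD u v = 0) → u = 0) ∧
    -- Q₋ is ad-invariant
    (∀ u v w : H × D × Dual ℝ H,
      Qminus BH BD (dbr BD π u v) w = - Qminus BH BD v (dbr BD π u w)) ∧
    -- Q₋ restricts nondegenerately to h
    (∀ a : H, (∀ b : H, Qminus BH BD (a, 0, 0) (b, 0, 0) = 0) → a = 0) ∧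
    -- m := h^⊥ equals {(h, x, ℓ(h))}
    (∀ u : H × D × Dual ℝ H, (∀ a : H, Qminus BH BD u (a, 0, 0) = 0) ↔ u.2.2 = BH u.1) ∧
    -- m is ad(h)-invariant: [h, m] ⊆ m
    (∀ a : H, ∀ u : H × D × Dual ℝ H, u.2.2 = BH u.1 →
      (dbr BD π (a, 0, 0) u).2.2 = BH (dbr BD π (a, 0, 0) u).1) ∧
    -- λ is linear
    (∀ u v : D × Dual ℝ H, lam BH hBHnd (u + v) = lam BH hBHnd u + lam BH hBHnd v) ∧
    (∀ (c : ℝ) (u : D × Dual ℝ H), lam BH hBHnd (c • u) = c • lam BH hBHnd u) ∧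
    -- λ maps G(d) bijectively onto m
    (∀ u : D × Dual ℝ H, (lam BH hBHnd u).2.2 = BH (lam BH hBHnd u).1) ∧
    (∀ w : H × D × Dual ℝ H, w.2.2 = BH w.1 → ∃! u : D × Dual ℝ H, lam BH hBHnd u = w) ∧
    -- λ is an isometry from (G(d), ⟨,⟩) to (m, Q₋|_{m×m})
    (∀ u v : D × Dual ℝ H,
      Qminus BH BD (lam BH hBHnd u) (lam BH hBHnd v) = gform BH hBHnd BD u v) ∧
    -- pmG is the projection onto m along h
    (∀ w : H × D × Dual ℝ H, (pmG BH hBHnd w).2.2 = BH (pmG BH hBHnd w).1 ∧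
      (w - pmG BH hBHnd w).2.1 = 0 ∧ (w - pmG BH hBHnd w).2.2 = 0) ∧
    -- natural reductivity: Q₋([u,v]_m, w) + Q₋(v, [u,w]_m) = 0 on m
    (∀ u v w : H × D × Dual ℝ H, u.2.2 = BH u.1 → v.2.2 = BH v.1 → w.2.2 = BH w.1 →
      Qminus BH BD (pmG BH hBHnd (dbr BD π u v)) w
        + Qminus BH BD v (pmG BH hBHnd (dbr BD π u w)) = 0) := by
  have hEB := BH_ellInv BH hBHnd
  have hEBa : ∀ (α : Dual ℝ H) (v : H), BH (ellInv BH hBHnd α) v = α v := by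
    intro α v; rw [hEB]
  have hEBb : ∀ (α : Dual ℝ H) (v : H), BH v (ellInv BH hBHnd α) = α v := by
    intro α v; rw [hBHsymm, hEBa]
  refine ⟨?_, ?_, ?_, ?_, ?_, ?_, ?_, ?_, ?_, ?_, ?_, ?_⟩
  · -- nondegeneracy of Q₋
    rintro ⟨a, x, α⟩ h
    have hx : x = 0 := by
      apply hBDnd.1
      intro y
      have := h (0, y, 0)
      simpa [Qminus] using this
    have ha : a = 0 := by
      rw [← Module.forall_dual_apply_eq_zero_iff ℝ a]
      intro β
      have := h (0, 0, β)
      simpa [Qminus] using this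
    have hα : α = 0 := by
      ext b
      have := h (b, 0, 0)
      simp [Qminus, ha] at this
      simpa using this
    rw [ha, hx, hα]
    rfl
  · -- ad-invariance
    rintro ⟨a, x, α⟩ ⟨b, y, βv⟩ ⟨c, z, γ⟩
    simp only [Qminus, dbr, LinearMap.sub_apply, LinearMap.add_apply, LinearMap.comp_apply,
      LieAlgebra.ad_apply, beta_apply, map_add, map_sub, LinearMap.add_apply,
      LinearMap.sub_apply, map_neg]
    have halpha : α ⁅b, c⁆ = - α ⁅c, b⁆ := by rw [← lie_skew b c, map_neg]
    linear_combination - hBHinv a b c + hBDinv x y z + hπskew a y z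
      + hBDsymm (π c x) y + halpha
  · -- nondegenerate on h
    intro a h
    apply hBHnd.1
    intro b
    have := h b
    simp [Qminus] at this
    linarith [this]
  · -- m = h^⊥
    rintro ⟨a, x, α⟩
    constructor
    · intro h
      ext b
      have := h b
      simp [Qminus] at this
      linarith [this]
    · intro h b
      simp only at h
      simp [Qminus, h]
  · -- m ad(h)-invariant
    rintro a ⟨b, x, α⟩ h
    simp only at h
    ext c
    simp only [dbr, LinearMap.add_apply, LinearMap.sub_apply, LinearMap.comp_apply,
      LieAlgebra.ad_apply, beta_apply, map_zero, LinearMap.zero_apply, zero_lie, lie_zero, h]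
    linear_combination - hBHinv a b c
  · intro u v
    simp [lam, ellInv, map_add, Prod.ext_iff]
  · intro c u
    simp [lam, ellInv, map_smul, Prod.ext_iff]
  · intro u
    simp [lam, hEB]
  · rintro ⟨a, x, α⟩ h
    simp only at h
    refine ⟨(x, α), ?_, ?_⟩
    · simp [lam, h, ellInv_BH]
    · rintro ⟨y, β⟩ hy
      simp [lam, Prod.ext_iff] at hy
      simp [hy.2.1, hy.2.2]
  · intro u v
    simp only [Qminus, lam, gform, hEBa]
    have h2 : v.2 (ellInv BH hBHnd u.2) = u.2 (ellInv BH hBHnd v.2) := by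
      rw [← hEBa v.2 (ellInv BH hBHnd u.2), ← hEBa u.2 (ellInv BH hBHnd v.2)]
      exact hBHsymm _ _
    linarith
  · intro w
    exact ⟨by simp [pmG, hEB], by simp [pmG], by simp [pmG]⟩
  · -- natural reductivity
    rintro ⟨a, x, α⟩ ⟨b, y, βv⟩ ⟨c, z, γ⟩ hu hv hw
    simp only at hu hv hw
    subst hu hv hw
    simp only [Qminus, pmG, dbr, LinearMap.sub_apply, LinearMap.add_apply,
      LinearMap.comp_apply, LieAlgebra.ad_apply, beta_apply, map_add, map_sub, hEBa, hEBb]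
    have h1 : BH a ⁅b, c⁆ = - BH a ⁅c, b⁆ := by rw [← lie_skew b c, map_neg]
    linear_combination hBDinv x y z + hπskew a y z + hBDsymm (π c x) y + h1
      - hBHinv a b c + hBHsymm ⁅a, b⁆ c
end

section
/- The Ricci tensor Ric(u,v) := tr(w ↦ R(w,u)v) of G(d) satisfies: (i) Ric(ℓ(h1), ℓ(h2)) = −¼ tr(π(h1)∘π(h2)) for h1,h2 ∈ h; (ii) Ric(x, ℓ(h)) = −¼ tr(π(h)∘ad_d(x)) for x ∈ d, h ∈ h, where ad_d(x) is the adjoint map of d; (iii) if (z_i) is a basis of h orthonormal for ⟨,⟩_h with ε_i := ⟨z_i,z_i⟩_h = ±1, then Ric(x,y) = ½ Σ_i ε_i ⟨π(z_i)²x, y⟩_d − ¼ tr(ad_d(x)∘ad_d(y)) for all x,y ∈ d. -/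
open Module

variable {H D : Type} [LieRing H] [LieAlgebra ℝ H] [FiniteDimensional ℝ H]
  [LieRing D] [LieAlgebra ℝ D] [FiniteDimensional ℝ D]

/-- The bracket on `G(d) = d ⊕ h*`: `[x₁+α₁, x₂+α₂] = [x₁,x₂]_d + β(x₁,x₂)`. -/
def gbr (BD : LinearMap.BilinForm ℝ D) (π : H →ₗ[ℝ] D →ₗ[ℝ] D)
    (u v : D × Dual ℝ H) : D × Dual ℝ H :=
  (⁅u.1, v.1⁆, beta BD π u.1 v.1)

/-- The Levi-Civita connection
`∇_{x₁+ℓ(h₁)}(x₂+ℓ(h₂)) = ½([x₁,x₂]_d + β(x₁,x₂) − π(h₁)x₂ − π(h₂)x₁)`. -/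
noncomputable def nabG (BH : LinearMap.BilinForm ℝ H) (hBH : BH.Nondegenerate)
    (BD : LinearMap.BilinForm ℝ D) (π : H →ₗ[ℝ] D →ₗ[ℝ] D)
    (u v : D × Dual ℝ H) : D × Dual ℝ H :=
  ((2⁻¹ : ℝ) • (⁅u.1, v.1⁆ - π (ellInv BH hBH u.2) v.1 - π (ellInv BH hBH v.2) u.1),
   (2⁻¹ : ℝ) • beta BD π u.1 v.1)

/-- The curvature `R(w₁,w₂)w₃ = ∇_{w₁}∇_{w₂}w₃ − ∇_{w₂}∇_{w₁}w₃ − ∇_{[w₁,w₂]}w₃`. -/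
noncomputable def Rfun (BH : LinearMap.BilinForm ℝ H) (hBH : BH.Nondegenerate)
    (BD : LinearMap.BilinForm ℝ D) (π : H →ₗ[ℝ] D →ₗ[ℝ] D)
    (w₁ w₂ w₃ : D × Dual ℝ H) : D × Dual ℝ H :=
  nabG BH hBH BD π w₁ (nabG BH hBH BD π w₂ w₃)
    - nabG BH hBH BD π w₂ (nabG BH hBH BD π w₁ w₃)
    - nabG BH hBH BD π (gbr BD π w₁ w₂) w₃

set_option linter.unusedSectionVars false in
open Matrix in
/-- Trace of the dual map equals the trace. -/
private lemma trace_dualMap'' {M : Type} [AddCommGroup M] [Module ℝ M] [FiniteDimensional ℝ M]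
    (f : M →ₗ[ℝ] M) :
    LinearMap.trace ℝ (Dual ℝ M) f.dualMap = LinearMap.trace ℝ M f := by
  classical
  let b := Module.finBasis ℝ M
  rw [LinearMap.trace_eq_matrix_trace ℝ b f,
      LinearMap.trace_eq_matrix_trace ℝ b.dualBasis f.dualMap]
  have h : LinearMap.toMatrix b.dualBasis b.dualBasis f.dualMap
      = (LinearMap.toMatrix b b f)ᵀ := by
    ext i j
    rw [LinearMap.toMatrix_apply, Matrix.transpose_apply, LinearMap.toMatrix_apply,
        Basis.dualBasis_repr, LinearMap.dualMap_apply, Basis.dualBasis_apply]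
  rw [h, Matrix.trace_transpose]

/-- A skew-symmetric endomorphism w.r.t. a nondegenerate bilinear form is traceless. -/
private lemma trace_skew {M : Type} [AddCommGroup M] [Module ℝ M] [FiniteDimensional ℝ M]
    (B : LinearMap.BilinForm ℝ M) (hnd : B.Nondegenerate)
    (A : M →ₗ[ℝ] M) (h : ∀ z w, B (A z) w = - B z (A w)) :
    LinearMap.trace ℝ M A = 0 := by
  have key : (B.toDual hnd).conj A = - A.dualMap := by
    ext f w
    simp only [LinearEquiv.conj_apply, LinearMap.coe_comp, LinearEquiv.coe_coe,
      Function.comp_apply, LinearMap.neg_apply, LinearMap.dualMap_apply]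
    rw [LinearMap.BilinForm.toDual_def, h, LinearMap.BilinForm.apply_toDual_symm_apply]
  have h1 := LinearMap.trace_conj' A (B.toDual hnd)
  rw [key, (LinearMap.trace ℝ (Dual ℝ M)).map_neg A.dualMap, trace_dualMap''] at h1
  linarith

/-- The trace of an endomorphism of a product as a sum of traces of diagonal blocks. -/
private lemma trace_prod' {M N : Type} [AddCommGroup M] [Module ℝ M] [FiniteDimensional ℝ M]
    [AddCommGroup N] [Module ℝ N] [FiniteDimensional ℝ N]
    (f : (M × N) →ₗ[ℝ] (M × N)) :
    LinearMap.trace ℝ (M × N) f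
      = LinearMap.trace ℝ M (LinearMap.fst ℝ M N ∘ₗ f ∘ₗ LinearMap.inl ℝ M N)
        + LinearMap.trace ℝ N (LinearMap.snd ℝ M N ∘ₗ f ∘ₗ LinearMap.inr ℝ M N) := by
  have hf : f = (LinearMap.inl ℝ M N ∘ₗ (LinearMap.fst ℝ M N ∘ₗ f))
      + (LinearMap.inr ℝ M N ∘ₗ (LinearMap.snd ℝ M N ∘ₗ f)) := by
    ext x <;> simp
  have e1 := (LinearMap.trace_comp_comm' (LinearMap.inl ℝ M N) (LinearMap.fst ℝ M N ∘ₗ f)).symm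
  have e2 := (LinearMap.trace_comp_comm' (LinearMap.inr ℝ M N) (LinearMap.snd ℝ M N ∘ₗ f)).symm
  conv_lhs => rw [hf]
  rw [map_add, e1, e2, LinearMap.comp_assoc, LinearMap.comp_assoc]

private lemma ellInv_apply (BH : LinearMap.BilinForm ℝ H) (hnd : BH.Nondegenerate)
    (α : Dual ℝ H) (w : H) : BH (ellInv BH hnd α) w = α w :=
  LinearMap.BilinForm.apply_toDual_symm_apply α w

private lemma ellInv_ell (BH : LinearMap.BilinForm ℝ H) (hnd : BH.Nondegenerate) (h : H) :
    ellInv BH hnd (BH h) = h := by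
  have e : (BH.toDual hnd) h = BH h := by
    ext w; exact LinearMap.BilinForm.toDual_def hnd
  rw [ellInv, ← e, LinearEquiv.symm_apply_apply]

@[simp] private lemma ellInv_zero (BH : LinearMap.BilinForm ℝ H) (hnd : BH.Nondegenerate) :
    ellInv BH hnd 0 = 0 := by simp [ellInv]

@[simp] private lemma ellInv_smul (BH : LinearMap.BilinForm ℝ H) (hnd : BH.Nondegenerate)
    (r : ℝ) (α : Dual ℝ H) : ellInv BH hnd (r • α) = r • ellInv BH hnd α := by
  simp [ellInv]

set_option linter.unusedSectionVars false in
@[simp] private lemma beta_zero_left (BD : LinearMap.BilinForm ℝ D)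
    (π : H →ₗ[ℝ] D →ₗ[ℝ] D) (y : D) : beta BD π 0 y = 0 := by simp [beta]

set_option linter.unusedSectionVars false in
@[simp] private lemma beta_zero_right (BD : LinearMap.BilinForm ℝ D)
    (π : H →ₗ[ℝ] D →ₗ[ℝ] D) (x : D) : beta BD π x 0 = 0 := by simp [beta]

set_option linter.unusedSectionVars false in
/-- Trace of an endomorphism of `H` computed in an orthonormal basis. -/
private lemma trace_ortho (BH : LinearMap.BilinForm ℝ H) {n : ℕ} (bz : Basis (Fin n) ℝ H)
    (ε : Fin n → ℝ) (hε : ∀ i, ε i = 1 ∨ ε i = -1)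
    (horth : ∀ i j, BH (bz i) (bz j) = if i = j then ε i else 0)
    (f : H →ₗ[ℝ] H) :
    LinearMap.trace ℝ H f = ∑ i, ε i * BH (f (bz i)) (bz i) := by
  classical
  rw [LinearMap.trace_eq_matrix_trace ℝ bz f, Matrix.trace]
  apply Finset.sum_congr rfl
  intro i _
  have hexp : BH (f (bz i)) (bz i)
      = ∑ j, bz.repr (f (bz i)) j * (if j = i then ε j else 0) := by
    conv_lhs => rw [← bz.sum_repr (f (bz i))]
    rw [map_sum, LinearMap.sum_apply]
    exact Finset.sum_congr rfl fun j _ => by rw [map_smul, LinearMap.smul_apply,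
      smul_eq_mul, horth j i]
  have hsq : ε i * ε i = 1 := by rcases hε i with h | h <;> rw [h] <;> norm_num
  rw [Matrix.diag_apply, LinearMap.toMatrix_apply, hexp]
  rw [Finset.sum_eq_single i]
  · rw [if_pos rfl]
    have e : ε i * ((bz.repr (f (bz i))) i * ε i) = (ε i * ε i) * (bz.repr (f (bz i))) i := by
      ring
    rw [e, hsq, one_mul]
  · intro j _ hj; rw [if_neg hj, mul_zero]
  · intro hi; exact absurd (Finset.mem_univ i) hi

/-- `ℓ⁻¹` as a linear map. -/
noncomputable def ellInvL (BH : LinearMap.BilinForm ℝ H) (hnd : BH.Nondegenerate) :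
    Dual ℝ H →ₗ[ℝ] H := ((BH.toDual hnd).symm : Dual ℝ H ≃ₗ[ℝ] H)

@[simp] private lemma ellInvL_apply (BH : LinearMap.BilinForm ℝ H) (hnd : BH.Nondegenerate)
    (α : Dual ℝ H) : ellInvL BH hnd α = ellInv BH hnd α := rfl

/-- `z ↦ β(z,y)` as a linear map. -/
noncomputable def betaL (BD : LinearMap.BilinForm ℝ D) (π : H →ₗ[ℝ] D →ₗ[ℝ] D) (y : D) :
    D →ₗ[ℝ] Dual ℝ H := (LinearMap.llcomp ℝ D D ℝ (BD.flip y) ∘ₗ π).flip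

set_option linter.unusedSectionVars false in
@[simp] private lemma betaL_apply (BD : LinearMap.BilinForm ℝ D) (π : H →ₗ[ℝ] D →ₗ[ℝ] D)
    (y z : D) : betaL BD π y z = beta BD π z y := by
  ext h; simp [betaL, beta]

/-- `w ↦ β(x,w)` as a linear map. -/
noncomputable def betaR (BD : LinearMap.BilinForm ℝ D) (π : H →ₗ[ℝ] D →ₗ[ℝ] D) (x : D) :
    D →ₗ[ℝ] Dual ℝ H := (BD ∘ₗ π.flip x).flip

set_option linter.unusedSectionVars false in
@[simp] private lemma betaR_apply (BD : LinearMap.BilinForm ℝ D) (π : H →ₗ[ℝ] D →ₗ[ℝ] D)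
    (x w : D) : betaR BD π x w = beta BD π x w := by
  ext h; simp [betaR, beta]

/-- Formulas for the Ricci tensor `Ric(u,v) = tr(w ↦ R(w,u)v)` of `G(d)`. -/
theorem ricci_formulas
    (BH : LinearMap.BilinForm ℝ H)
    (hBHsymm : ∀ a b : H, BH a b = BH b a)
    (hBHnd : BH.Nondegenerate)
    (hBHinv : ∀ a b c : H, BH ⁅a, b⁆ c = - BH b ⁅a, c⁆)
    (BD : LinearMap.BilinForm ℝ D)
    (hBDsymm : ∀ x y : D, BD x y = BD y x)
    (hBDnd : BD.Nondegenerate)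
    (hBDinv : ∀ x y z : D, BD ⁅x, y⁆ z = - BD y ⁅x, z⁆)
    (π : H →ₗ[ℝ] D →ₗ[ℝ] D)
    (hπder : ∀ a : H, ∀ x y : D, π a ⁅x, y⁆ = ⁅π a x, y⁆ + ⁅x, π a y⁆)
    (hπhom : ∀ a b : H, π ⁅a, b⁆ = π a ∘ₗ π b - π b ∘ₗ π a)
    (hπskew : ∀ a : H, ∀ x y : D, BD (π a x) y = - BD x (π a y))
    -- `Rop u v` is the linear endomorphism `w ↦ R(w,u)v` of G(d)
    (Rop : (D × Dual ℝ H) → (D × Dual ℝ H) → ((D × Dual ℝ H) →ₗ[ℝ] (D × Dual ℝ H)))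
    (hRop : ∀ u v w : D × Dual ℝ H, Rop u v w = Rfun BH hBHnd BD π w u v) :
    -- (i) Ric(ℓh₁, ℓh₂) = −¼ tr(π(h₁)π(h₂))
    (∀ h₁ h₂ : H,
      LinearMap.trace ℝ (D × Dual ℝ H) (Rop (0, BH h₁) (0, BH h₂))
        = -(4⁻¹ : ℝ) * LinearMap.trace ℝ D (π h₁ ∘ₗ π h₂)) ∧
    -- (ii) Ric(x, ℓh) = −¼ tr(π(h) ∘ ad_d(x))
    (∀ (x : D) (h : H),
      LinearMap.trace ℝ (D × Dual ℝ H) (Rop (x, 0) (0, BH h))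
        = -(4⁻¹ : ℝ) * LinearMap.trace ℝ D (π h ∘ₗ (LieAlgebra.ad ℝ D x : D →ₗ[ℝ] D))) ∧
    -- (iii) for an orthonormal basis (zᵢ) of h with εᵢ = ⟨zᵢ,zᵢ⟩ = ±1,
    -- Ric(x,y) = ½ Σᵢ εᵢ ⟨π(zᵢ)²x, y⟩_d − ¼ tr(ad_d(x) ∘ ad_d(y))
    (∀ (n : ℕ) (bz : Basis (Fin n) ℝ H) (ε : Fin n → ℝ),
      (∀ i, ε i = 1 ∨ ε i = -1) →
      (∀ i j, BH (bz i) (bz j) = if i = j then ε i else 0) →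
      ∀ x y : D,
        LinearMap.trace ℝ (D × Dual ℝ H) (Rop (x, 0) (y, 0))
          = (2⁻¹ : ℝ) * (∑ i, ε i * BD (π (bz i) (π (bz i) x)) y)
            - (4⁻¹ : ℝ) * LinearMap.trace ℝ D
                ((LieAlgebra.ad ℝ D x : D →ₗ[ℝ] D) ∘ₗ (LieAlgebra.ad ℝ D y : D →ₗ[ℝ] D))) := by
  refine ⟨?_, ?_, ?_⟩
  · -- case (i)
    intro h₁ h₂
    rw [trace_prod']
    have hD : LinearMap.fst ℝ D (Dual ℝ H) ∘ₗ Rop (0, BH h₁) (0, BH h₂)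
        ∘ₗ LinearMap.inl ℝ D (Dual ℝ H) = (-(4⁻¹:ℝ)) • (π h₁ ∘ₗ π h₂) := by
      ext z
      simp [hRop, Rfun, nabG, gbr, ellInv_ell, smul_smul]
      module
    have hH : LinearMap.snd ℝ D (Dual ℝ H) ∘ₗ Rop (0, BH h₁) (0, BH h₂)
        ∘ₗ LinearMap.inr ℝ D (Dual ℝ H) = 0 := by
      ext γ
      simp [hRop, Rfun, nabG, gbr, ellInv_ell]
    rw [hD, hH, map_zero, map_smul, smul_eq_mul, add_zero]
  · -- case (ii)
    intro x h
    rw [trace_prod']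
    have hD : LinearMap.fst ℝ D (Dual ℝ H) ∘ₗ Rop (x, 0) (0, BH h)
        ∘ₗ LinearMap.inl ℝ D (Dual ℝ H)
        = (-(4⁻¹:ℝ)) • ((LieAlgebra.ad ℝ D (π h x) : D →ₗ[ℝ] D)
            + (LieAlgebra.ad ℝ D x : D →ₗ[ℝ] D) ∘ₗ π h) := by
      ext z
      simp [hRop, Rfun, nabG, gbr, ellInv_ell, hπder, LieAlgebra.ad_apply]
      rw [← lie_skew ((π h) x) z]
      module
    have hH : LinearMap.snd ℝ D (Dual ℝ H) ∘ₗ Rop (x, 0) (0, BH h)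
        ∘ₗ LinearMap.inr ℝ D (Dual ℝ H) = 0 := by
      ext γ
      simp [hRop, Rfun, nabG, gbr, ellInv_ell]
    rw [hD, hH, map_zero, map_smul, smul_eq_mul, add_zero, map_add]
    have t0 : LinearMap.trace ℝ D (LieAlgebra.ad ℝ D (π h x) : D →ₗ[ℝ] D) = 0 := by
      apply trace_skew BD hBDnd
      intro z w
      exact hBDinv (π h x) z w
    have t1 : LinearMap.trace ℝ D ((LieAlgebra.ad ℝ D x : D →ₗ[ℝ] D) ∘ₗ π h)
        = LinearMap.trace ℝ D (π h ∘ₗ (LieAlgebra.ad ℝ D x : D →ₗ[ℝ] D)) :=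
      LinearMap.trace_comp_comm' _ _
    rw [t0, t1, zero_add]
  · -- case (iii)
    intro n bz ε hε horth x y
    rw [trace_prod']
    have hD : LinearMap.fst ℝ D (Dual ℝ H) ∘ₗ Rop (x, 0) (y, 0)
        ∘ₗ LinearMap.inl ℝ D (Dual ℝ H)
        = (-(4⁻¹:ℝ)) • (LieAlgebra.ad ℝ D ⁅x,y⁆ : D →ₗ[ℝ] D)
          + (-(4⁻¹:ℝ)) • π (ellInv BH hBHnd (beta BD π x y))
          + (4⁻¹:ℝ) • ((LieAlgebra.ad ℝ D x : D →ₗ[ℝ] D) ∘ₗ (LieAlgebra.ad ℝ D y : D →ₗ[ℝ] D))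
          + (4⁻¹:ℝ) • (π.flip x ∘ₗ ellInvL BH hBHnd ∘ₗ betaL BD π y)
          + (-(2⁻¹:ℝ)) • ((LieAlgebra.ad ℝ D y : D →ₗ[ℝ] D) ∘ₗ (LieAlgebra.ad ℝ D x : D →ₗ[ℝ] D))
          + (2⁻¹:ℝ) • (π.flip y ∘ₗ ellInvL BH hBHnd ∘ₗ betaL BD π x) := by
      ext z
      simp [hRop, Rfun, nabG, gbr, LieAlgebra.ad_apply]
      have jac : ⁅x, ⁅z, y⁆⁆ = ⁅z, ⁅x, y⁆⁆ - ⁅y, ⁅x, z⁆⁆ := by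
        rw [leibniz_lie x z y, ← lie_skew ⁅x, z⁆ y]
        abel
      rw [jac]
      module
    have hH : LinearMap.snd ℝ D (Dual ℝ H) ∘ₗ Rop (x, 0) (y, 0)
        ∘ₗ LinearMap.inr ℝ D (Dual ℝ H)
        = (4⁻¹:ℝ) • (betaR BD π x ∘ₗ π.flip y ∘ₗ ellInvL BH hBHnd) := by
      ext γ w
      simp [hRop, Rfun, nabG, gbr, beta]
      ring
    rw [hD, hH]
    -- traces of the pieces
    have t1 : LinearMap.trace ℝ D (LieAlgebra.ad ℝ D ⁅x,y⁆ : D →ₗ[ℝ] D) = 0 := by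
      apply trace_skew BD hBDnd
      intro z w
      exact hBDinv ⁅x,y⁆ z w
    have t2 : LinearMap.trace ℝ D (π (ellInv BH hBHnd (beta BD π x y))) = 0 := by
      apply trace_skew BD hBDnd
      intro z w
      exact hπskew _ z w
    have t5 : LinearMap.trace ℝ D
        ((LieAlgebra.ad ℝ D y : D →ₗ[ℝ] D) ∘ₗ (LieAlgebra.ad ℝ D x : D →ₗ[ℝ] D))
        = LinearMap.trace ℝ D
        ((LieAlgebra.ad ℝ D x : D →ₗ[ℝ] D) ∘ₗ (LieAlgebra.ad ℝ D y : D →ₗ[ℝ] D)) :=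
      LinearMap.trace_comp_comm' _ _
    have t4 : LinearMap.trace ℝ D (π.flip x ∘ₗ ellInvL BH hBHnd ∘ₗ betaL BD π y)
        = ∑ i, ε i * BD (π (bz i) (π (bz i) x)) y := by
      rw [LinearMap.trace_comp_comm' ((ellInvL BH hBHnd ∘ₗ betaL BD π y)) (π.flip x),
        trace_ortho BH bz ε hε horth]
      apply Finset.sum_congr rfl
      intro i _
      congr 1
      simp only [LinearMap.comp_apply, ellInvL_apply, betaL_apply, LinearMap.flip_apply]
      rw [ellInv_apply]
      simp [beta]
    have t6 : LinearMap.trace ℝ D (π.flip y ∘ₗ ellInvL BH hBHnd ∘ₗ betaL BD π x)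
        = ∑ i, ε i * BD (π (bz i) (π (bz i) x)) y := by
      rw [LinearMap.trace_comp_comm' ((ellInvL BH hBHnd ∘ₗ betaL BD π x)) (π.flip y),
        trace_ortho BH bz ε hε horth]
      apply Finset.sum_congr rfl
      intro i _
      congr 1
      simp only [LinearMap.comp_apply, ellInvL_apply, betaL_apply, LinearMap.flip_apply]
      rw [ellInv_apply]
      simp only [beta, LinearMap.comp_apply, LinearMap.flip_apply]
      have e1 := hπskew (bz i) (π (bz i) y) x
      have e2 := hπskew (bz i) (π (bz i) x) y
      have e3 := hBDsymm (π (bz i) y) (π (bz i) x)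
      have e0 : (BD.flip x) ((π (bz i)) ((π (bz i)) y)) = BD ((π (bz i)) ((π (bz i)) y)) x := rfl
      linarith
    have t7 : LinearMap.trace ℝ (Dual ℝ H)
        (betaR BD π x ∘ₗ π.flip y ∘ₗ ellInvL BH hBHnd)
        = - ∑ i, ε i * BD (π (bz i) (π (bz i) x)) y := by
      rw [← LinearMap.comp_assoc,
        LinearMap.trace_comp_comm' (ellInvL BH hBHnd) (betaR BD π x ∘ₗ π.flip y),
        trace_ortho BH bz ε hε horth, ← Finset.sum_neg_distrib]
      apply Finset.sum_congr rfl
      intro i _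
      have : BH ((ellInvL BH hBHnd ∘ₗ betaR BD π x ∘ₗ π.flip y) (bz i)) (bz i)
          = BD (π (bz i) x) (π (bz i) y) := by
        simp only [LinearMap.comp_apply, ellInvL_apply, betaR_apply, LinearMap.flip_apply]
        rw [ellInv_apply]
        simp [beta]
      have e2 : BD (π (bz i) x) (π (bz i) y) = - BD (π (bz i) (π (bz i) x)) y := by
        linarith [hπskew (bz i) (π (bz i) x) y]
      rw [this, e2]
      ring
    simp only [map_add, map_smul, smul_eq_mul]
    rw [t1, t2, t4, t5, t6, t7]
    ring
end
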